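/- Let A be a group, C and C' subgroups of A, and φ : C ≃* C' an isomorphism. Let D = A *_{C≅C'} A be the amalgamated free product of two copies of A obtained by identifying the subgroup C' of the first copy with the subgroup C of the second copy via φ⁻¹ (the pushout of the inclusions c' ↦ c' into the first copy and c' ↦ φ⁻¹(c') into the second copy, for c' ∈ C'), and let j₁, j₂ : A →* D be the two canonical injections. Let ψ : j₁(A) ≃* j₂(A) be the isomorphism of subgroups of D induced by the identity map of A (ψ(j₁(a)) = j₂(a)). Then there is a group isomorphism HNNExtension D (j₁(A)) (j₂(A)) ψ ≃* HNNExtension A C C' φ. -/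

import Mathlib

/-!
STATEMENT 16: Let `A` be a group, `C` and `C'` subgroups of `A`, and `φ : C ≃* C'` an
isomorphism.  Let `D = A *_{C ≅ C'} A` be the amalgamated free product of two copies of
`A` identifying `C'` in the first copy with `C` in the second copy via `φ⁻¹`: the
pushout of the inclusions `c' ↦ c'` (into the first copy) and `c' ↦ φ⁻¹ c'` (into the
second copy), for `c' ∈ C'`.  Here the pushout is presented by its universal property:
`D` is a group with homomorphisms `j₁ j₂ : A →* D` such that
`j₁ ∘ (C'.subtype) = j₂ ∘ (C.subtype ∘ φ.symm)` which is universal among such.  Let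
`ψ : j₁(A) ≃* j₂(A)` be the isomorphism induced by the identity of `A`
(`ψ (j₁ a) = j₂ a`).  Then `HNNExtension D j₁(A) j₂(A) ψ ≃* HNNExtension A C C' φ`.
-/

theorem hnnExtension_of_amalgam_iso
    {A : Type} [Group A] (C C' : Subgroup A) (φ : C ≃* C')
    (D : Type) [Group D] (j₁ j₂ : A →* D)
    (hcomm : j₁.comp C'.subtype = j₂.comp (C.subtype.comp φ.symm.toMonoidHom))
    (huniv : ∀ (Q : Type) [Group Q] (k₁ k₂ : A →* Q),
      k₁.comp C'.subtype = k₂.comp (C.subtype.comp φ.symm.toMonoidHom) →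
        ∃! h : D →* Q, h.comp j₁ = k₁ ∧ h.comp j₂ = k₂)
    (ψ : j₁.range ≃* j₂.range)
    (hψ : ∀ (a : A) (ha : j₁ a ∈ j₁.range), ((ψ ⟨j₁ a, ha⟩ : j₂.range) : D) = j₂ a) :
    Nonempty (HNNExtension D j₁.range j₂.range ψ ≃* HNNExtension A C C' φ) := by
  classical
  -- abbreviations
  set H := HNNExtension A C C' φ with hH
  set K := HNNExtension D j₁.range j₂.range ψ with hK
  have hkey : ∀ c : C, j₁ ((φ c : C') : A) = j₂ c := by
    intro c
    have := congrArg (fun f : C' →* D => f (φ c)) hcomm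
    simpa using this
  -- the homomorphism D →* H
  let k₂ : A →* H := (MulAut.conj (HNNExtension.t)).toMonoidHom.comp HNNExtension.of
  have hcompat : (HNNExtension.of (G := A) (A := C) (B := C') (φ := φ)).comp C'.subtype
      = k₂.comp (C.subtype.comp φ.symm.toMonoidHom) := by
    ext c'
    have := HNNExtension.equiv_eq_conj (φ := φ) (φ.symm c')
    simpa [k₂, MulAut.conj_apply, mul_assoc] using this
  obtain ⟨h, ⟨h1, h2⟩, huniq⟩ := huniv H HNNExtension.of k₂ hcompat
  have h1' : ∀ a : A, h (j₁ a) = HNNExtension.of a := fun a =>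
    congrArg (fun f : A →* H => f a) h1
  have h2' : ∀ a : A, h (j₂ a) =
      HNNExtension.t * HNNExtension.of a * HNNExtension.t⁻¹ := fun a => by
    have := congrArg (fun f : A →* H => f a) h2
    simpa [k₂, MulAut.conj_apply, mul_assoc] using this
  have hF : ∀ x : j₁.range, HNNExtension.t * h (x : D)
      = h ((ψ x : j₂.range) : D) * HNNExtension.t := by
    rintro ⟨_, a, rfl⟩
    rw [hψ a ⟨a, rfl⟩, h1', h2']
    group
  let F : K →* H := HNNExtension.lift h HNNExtension.t hF
  -- the homomorphism H →* K
  let oK : D →* K := HNNExtension.of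
  let tK : K := HNNExtension.t
  have hG : ∀ c : C, tK * (oK.comp j₁) (c : A)
      = (oK.comp j₁) ((φ c : C') : A) * tK := by
    intro c
    have hmem : j₁ (c : A) ∈ j₁.range := ⟨c, rfl⟩
    have := HNNExtension.t_mul_of (φ := ψ) ⟨j₁ (c : A), hmem⟩
    rw [hψ (c : A) hmem] at this
    simpa [oK, tK, hkey c] using this
  let G' : H →* K := HNNExtension.lift (oK.comp j₁) tK hG
  have hGof : ∀ a : A, G' (HNNExtension.of a) = oK (j₁ a) := fun a =>
    HNNExtension.lift_of (oK.comp j₁) tK hG a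
  have hGt : G' (HNNExtension.t) = tK := HNNExtension.lift_t (oK.comp j₁) tK hG
  have hFof : ∀ d : D, F (oK d) = h d := fun d => HNNExtension.lift_of h _ hF d
  have hFt : F tK = HNNExtension.t := HNNExtension.lift_t h _ hF
  -- G' ∘ F = id
  have hGh : G'.comp h = oK := by
    have hkey' : ∀ c' : C', j₁ (c' : A) = j₂ ((φ.symm c' : C) : A) := by
      intro c'
      have := congrArg (fun f : C' →* D => f c') hcomm
      simpa using this
    have hcompat' : ((oK.comp j₁)).comp C'.subtype
        = ((oK.comp j₂).comp (C.subtype.comp φ.symm.toMonoidHom)) := by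
      ext c'
      exact congrArg oK (hkey' c')
    obtain ⟨g, _, guniq⟩ := huniv K (oK.comp j₁) (oK.comp j₂) hcompat'
    have e1 : (G'.comp h).comp j₁ = oK.comp j₁ := by
      ext a
      show G' (h (j₁ a)) = oK (j₁ a)
      rw [h1' a]
      exact hGof a
    have e2 : (G'.comp h).comp j₂ = oK.comp j₂ := by
      ext a
      show G' (h (j₂ a)) = oK (j₂ a)
      rw [h2' a]
      have hmem : j₁ a ∈ j₁.range := ⟨a, rfl⟩
      have ht := HNNExtension.t_mul_of (φ := ψ) ⟨j₁ a, hmem⟩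
      rw [hψ a hmem] at ht
      have h3 : G' (HNNExtension.t * HNNExtension.of a * HNNExtension.t⁻¹)
          = tK * oK (j₁ a) * tK⁻¹ := by
        rw [map_mul, map_mul, map_inv, hGof a, hGt]
      rw [h3, ht]
      exact mul_inv_cancel_right _ _
    have u1 := guniq (G'.comp h) ⟨e1, e2⟩
    have u2 := guniq oK ⟨rfl, rfl⟩
    rw [u1, ← u2]
  have hGF : G'.comp F = MonoidHom.id K := by
    apply HNNExtension.hom_ext
    · ext d
      show G' (F (oK d)) = oK d
      rw [hFof d]
      exact congrArg (fun f : D →* K => f d) hGh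
    · show G' (F HNNExtension.t) = HNNExtension.t
      rw [hFt]
      exact hGt
  have hFG : F.comp G' = MonoidHom.id H := by
    apply HNNExtension.hom_ext
    · ext a
      show F (G' (HNNExtension.of a)) = HNNExtension.of a
      rw [hGof a, hFof (j₁ a)]
      exact h1' a
    · show F (G' HNNExtension.t) = HNNExtension.t
      rw [hGt]
      exact hFt
  exact ⟨MonoidHom.toMulEquiv F G' hGF hFG⟩
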